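/- Let f : ℂ → ℂ be entire and let w : ℝ → ℂ be a nonconstant differentiable function with w′(t) = f(w(t)) for all t ∈ ℝ, periodic with minimal period p > 0. Then there exists ε > 0 such that every differentiable function v : ℝ → ℂ with v′(t) = f(v(t)) for all t ∈ ℝ and |v(0) − w(0)| < ε is itself periodic with minimal period exactly p: v(t+p) = v(t) for all t ∈ ℝ, and no q ∈ (0,p) is a period of v. (Nearby orbits are synchronously iso-periodic.) -/

import Mathlib

open Filter Metric Set MeasureTheory intervalIntegral
open scoped Topology NNReal
set_option maxHeartbeats 1000000

namespace IsoPerAux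

/-- Picard iterates for `ẋ = f(x)`. -/
noncomputable def picard (f : ℂ → ℂ) : ℕ → ℂ → ℝ → ℂ
  | 0 => fun z _ => z
  | (n+1) => fun z t => z + ∫ s in (0:ℝ)..t, f (picard f n z s)

/-- Formal z-derivatives of the Picard iterates. -/
noncomputable def picardD (f : ℂ → ℂ) : ℕ → ℂ → ℝ → ℂ
  | 0 => fun _ _ => 1
  | (n+1) => fun z t => 1 + ∫ s in (0:ℝ)..t, deriv f (picard f n z s) * picardD f n z s

variable {f : ℂ → ℂ}

lemma lipschitzOn_closedBall (hf : Differentiable ℂ f) (c : ℂ) (r : ℝ) :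
    ∃ K : NNReal, LipschitzOnWith K f (closedBall c r) := by
  have hcd : Continuous (deriv f) := (hf.contDiff (n := 2)).continuous_deriv (by norm_num)
  obtain ⟨C, hC⟩ := (isCompact_closedBall c r).exists_bound_of_continuousOn hcd.continuousOn
  refine ⟨Real.toNNReal C, (convex_closedBall c r).lipschitzOnWith_of_nnnorm_deriv_le
    (fun x _ => hf.differentiableAt) (fun x hx => ?_)⟩
  rw [← NNReal.coe_le_coe, coe_nnnorm, Real.coe_toNNReal']
  exact le_max_of_le_left (hC x hx)

lemma sol_shift {u : ℝ → ℂ} (hu : ∀ t, HasDerivAt u (f (u t)) t) (a : ℝ) :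
    ∀ t, HasDerivAt (fun s => u (s + a)) (f (u (t + a))) t := by
  intro t
  have h2 : HasDerivAt (fun s : ℝ => s + a) 1 t := (hasDerivAt_id t).add_const a
  have := (hu (t + a)).scomp t h2
  simp only [one_smul] at this
  exact this

lemma sol_unique (hf : Differentiable ℂ f) {u v : ℝ → ℂ}
    (hu : ∀ t, HasDerivAt u (f (u t)) t) (hv : ∀ t, HasDerivAt v (f (v t)) t)
    {t₀ : ℝ} (h : u t₀ = v t₀) : ∀ t, u t = v t := by
  intro t
  set a := min t t₀ - 1 with ha
  set b := max t t₀ + 1 with hb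
  have hucont : Continuous u := continuous_iff_continuousAt.mpr fun s => (hu s).continuousAt
  have hvcont : Continuous v := continuous_iff_continuousAt.mpr fun s => (hv s).continuousAt
  have ht₀ : t₀ ∈ Ioo a b := by
    constructor
    · have := min_le_right t t₀; linarith
    · have := le_max_right t t₀; linarith
  have htmem : t ∈ Icc a b := by
    constructor
    · have := min_le_left t t₀; linarith
    · have := le_max_left t t₀; linarith
  obtain ⟨R₁, hR₁⟩ := (isCompact_Icc (a := a) (b := b)).exists_bound_of_continuousOn
    hucont.continuousOn
  obtain ⟨R₂, hR₂⟩ := (isCompact_Icc (a := a) (b := b)).exists_bound_of_continuousOn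
    hvcont.continuousOn
  set R := max R₁ R₂ with hR
  obtain ⟨K, hK⟩ := lipschitzOn_closedBall hf 0 R
  have := ODE_solution_unique_of_mem_Icc (v := fun _ x => f x) (s := fun _ => closedBall (0:ℂ) R)
    (K := K) (fun _ _ => hK) ht₀ hucont.continuousOn
    (fun s _ => hu s)
    (fun s hs => by
      rw [mem_closedBall_zero_iff]
      exact le_trans (hR₁ s (Ioo_subset_Icc_self hs)) (le_max_left _ _))
    hvcont.continuousOn (fun s _ => hv s)
    (fun s hs => by
      rw [mem_closedBall_zero_iff]
      exact le_trans (hR₂ s (Ioo_subset_Icc_self hs)) (le_max_right _ _))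
    h
  exact this htmem

lemma ne_near {v : ℝ → ℂ} {d : ℂ} (hd : HasDerivAt v d 0) (hd0 : d ≠ 0) :
    ∀ᶠ t in 𝓝[≠] (0:ℝ), v t ≠ v 0 := by
  have h1 : Tendsto (slope v 0) (𝓝[≠] (0:ℝ)) (𝓝 d) := hasDerivAt_iff_tendsto_slope.mp hd
  filter_upwards [h1.eventually_ne hd0] with t ht hvt
  exact ht (by simp [slope, hvt])

lemma hderWithin_Ici {g : ℝ → ℂ} {d : ℂ} {τ' t : ℝ} (h : HasDerivWithinAt g d (Icc 0 τ') t)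
    (ht0 : 0 ≤ t) (htb : t < τ') : HasDerivWithinAt g d (Ici t) t := by
  apply h.mono_of_mem_nhdsWithin
  have h1 : Iio τ' ∈ 𝓝[Ici t] t := mem_nhdsWithin_of_mem_nhds (Iio_mem_nhds htb)
  exact mem_of_superset (inter_mem self_mem_nhdsWithin h1)
    (fun s hs => ⟨le_trans ht0 hs.1, le_of_lt hs.2⟩)

/-- A locally-defined solution staying well inside the ball agrees with any global solution
with the same initial value. -/
lemma flow_agrees {u : ℝ → ℂ} (hu : ∀ t, HasDerivAt u (f (u t)) t)
    {c : ℂ} {K : NNReal} (hK : LipschitzOnWith K f (closedBall c 1))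
    {b : ℝ} (hb : 0 ≤ b) {g : ℝ → ℂ} (hgc : ContinuousOn g (Icc 0 b))
    (hg : ∀ t ∈ Icc 0 b, HasDerivWithinAt g (f (g t)) (Icc 0 b) t)
    (hgm : ∀ t ∈ Icc 0 b, g t ∈ closedBall c (3/4))
    (h0 : u 0 = g 0) : ∀ t ∈ Icc 0 b, u t = g t := by
  have hucont : Continuous u := continuous_iff_continuousAt.mpr fun s => (hu s).continuousAt
  set A := {t | t ∈ Icc 0 b ∧ ∀ s ∈ Icc 0 t, u s ∈ closedBall c 1} with hA
  have hmemA : (0:ℝ) ∈ A := by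
    refine ⟨⟨le_refl _, hb⟩, fun s hs => ?_⟩
    have : s = 0 := le_antisymm hs.2 hs.1
    rw [this, h0]
    exact closedBall_subset_closedBall (by norm_num) (hgm 0 ⟨le_refl _, hb⟩)
  have hbdd : BddAbove A := ⟨b, fun x hx => hx.1.2⟩
  set T := sSup A with hT
  have hTa : 0 ≤ T := le_csSup hbdd hmemA
  have hTb : T ≤ b := csSup_le ⟨0, hmemA⟩ fun x hx => hx.1.2
  have hmem : ∀ s ∈ Icc 0 T, u s ∈ closedBall c 1 := by
    have hclosed : IsClosed {s : ℝ | u s ∈ closedBall c 1} :=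
      IsClosed.preimage hucont Metric.isClosed_closedBall
    have hico : Ico 0 T ⊆ {s : ℝ | u s ∈ closedBall c 1} := by
      intro s hs
      obtain ⟨x, hxA, hsx⟩ := exists_lt_of_lt_csSup ⟨0, hmemA⟩ hs.2
      exact hxA.2 s ⟨hs.1, le_of_lt hsx⟩
    intro s hs
    rcases eq_or_lt_of_le hTa with hT0 | hT0
    · have : s = 0 := le_antisymm (hT0 ▸ hs.2) hs.1
      rw [this]; exact hmemA.2 0 ⟨le_refl _, le_refl _⟩
    · have : Icc 0 T ⊆ {s : ℝ | u s ∈ closedBall c 1} := by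
        rw [← closure_Ico (ne_of_lt hT0)]
        exact hclosed.closure_subset_iff.mpr hico
      exact this hs
  have hEq : EqOn u g (Icc 0 T) := by
    apply ODE_solution_unique_of_mem_Icc_right (v := fun _ x => f x)
      (s := fun _ => closedBall c 1) (K := K) (fun _ _ => hK)
      hucont.continuousOn (fun s _ => (hu s).hasDerivWithinAt)
      (fun s hs => hmem s (Ico_subset_Icc_self hs))
      (hgc.mono (Icc_subset_Icc_right hTb))
      (fun s hs => hderWithin_Ici
        ((hg s ⟨hs.1, le_trans hs.2.le hTb⟩).mono (Icc_subset_Icc_right hTb)) hs.1 hs.2)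
      (fun s hs => closedBall_subset_closedBall (by norm_num)
        (hgm s ⟨hs.1, le_trans hs.2.le hTb⟩))
      h0
  have hTeq : T = b := by
    by_contra hne
    have hTb' : T < b := lt_of_le_of_ne hTb hne
    have huT : u T ∈ closedBall c (3/4) := by
      rw [hEq ⟨hTa, le_refl _⟩]
      exact hgm T ⟨hTa, hTb⟩
    obtain ⟨δ, hδ0, hδ⟩ := Metric.continuousAt_iff.mp hucont.continuousAt (ε := 1/4) (by norm_num)
    set t' := min b (T + δ/2) with ht'
    have hTt' : T < t' := lt_min hTb' (by linarith)
    have ht'A : t' ∈ A := by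
      refine ⟨⟨le_trans hTa hTt'.le, min_le_left _ _⟩, fun s hs => ?_⟩
      rcases le_or_gt s T with hsT | hsT
      · exact hmem s ⟨hs.1, hsT⟩
      · have hd : dist s T < δ := by
          rw [Real.dist_eq, abs_of_pos (by linarith)]
          have : s ≤ T + δ/2 := le_trans hs.2 (min_le_right _ _)
          linarith
        have := hδ hd
        rw [mem_closedBall]
        calc dist (u s) c ≤ dist (u s) (u T) + dist (u T) c := dist_triangle _ _ _
          _ ≤ 1/4 + 3/4 := add_le_add this.le huT
          _ = 1 := by norm_num
    exact absurd (le_csSup hbdd ht'A) (not_le.mpr hTt')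
  intro s hs
  exact hEq (hTeq ▸ hs)

/-- Continuity and holomorphy (in the initial value) of the Picard iterates. -/
lemma picard_reg (hf : Differentiable ℂ f) (n : ℕ) :
    Continuous (fun p : ℂ × ℝ => picard f n p.1 p.2) ∧
    Continuous (fun p : ℂ × ℝ => picardD f n p.1 p.2) ∧
    ∀ (z : ℂ) (t : ℝ), HasDerivAt (fun y => picard f n y t) (picardD f n z t) z := by
  have hfc : Continuous f := hf.continuous
  have hfd : Continuous (deriv f) := (hf.contDiff (n := 2)).continuous_deriv (by norm_num)
  induction n with
  | zero =>
    refine ⟨continuous_fst, continuous_const, fun z t => ?_⟩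
    exact hasDerivAt_id' z
  | succ n ih =>
    obtain ⟨hcu, hcD, hder⟩ := ih
    have hcu' : Continuous (Function.uncurry fun (z : ℂ) (s : ℝ) => f (picard f n z s)) :=
      hfc.comp hcu
    have hcD' : Continuous
        (Function.uncurry fun (z : ℂ) (s : ℝ) => deriv f (picard f n z s) * picardD f n z s) :=
      (hfd.comp hcu).mul hcD
    have hU : Continuous (fun p : ℂ × ℝ => picard f (n+1) p.1 p.2) := by
      show Continuous (fun p : ℂ × ℝ => p.1 + ∫ s in (0:ℝ)..p.2, f (picard f n p.1 s))
      exact continuous_fst.add (continuous_parametric_primitive_of_continuous hcu')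
    have hUD : Continuous (fun p : ℂ × ℝ => picardD f (n+1) p.1 p.2) := by
      show Continuous
        (fun p : ℂ × ℝ => 1 + ∫ s in (0:ℝ)..p.2, deriv f (picard f n p.1 s) * picardD f n p.1 s)
      exact continuous_const.add (continuous_parametric_primitive_of_continuous hcD')
    refine ⟨hU, hUD, fun z₀ t => ?_⟩
    obtain ⟨C, hC⟩ : ∃ C, ∀ y ∈ closedBall z₀ 1, ∀ s ∈ uIcc (0:ℝ) t,
        ‖deriv f (picard f n y s) * picardD f n y s‖ ≤ C := by
      obtain ⟨C, hC⟩ :=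
        ((isCompact_closedBall z₀ 1).prod isCompact_uIcc).exists_bound_of_continuousOn
        hcD'.continuousOn
      exact ⟨C, fun y hy s hs => hC (y, s) ⟨hy, hs⟩⟩
    have key := intervalIntegral.hasDerivAt_integral_of_dominated_loc_of_deriv_le
      (μ := volume) (a := (0:ℝ)) (b := t) (x₀ := z₀) (s := ball z₀ 1)
      (F := fun y s => f (picard f n y s))
      (F' := fun y s => deriv f (picard f n y s) * picardD f n y s)
      (bound := fun _ => C) (ball_mem_nhds z₀ one_pos)
      (Eventually.of_forall fun y =>
        ((hfc.comp (hcu.comp (continuous_const.prodMk continuous_id))).aestronglyMeasurable))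
      (((hfc.comp (hcu.comp (continuous_const.prodMk continuous_id)))).intervalIntegrable 0 t)
      ((hcD'.comp (continuous_const.prodMk continuous_id)).aestronglyMeasurable)
      (ae_of_all _ fun s hs y hy =>
        hC y (ball_subset_closedBall hy) s (uIoc_subset_uIcc hs))
      (intervalIntegrable_const)
      (ae_of_all _ fun s _ y _ =>
        ((hf.differentiableAt).hasDerivAt.comp y (hder y s)))
    have h2 := key.2
    show HasDerivAt (fun y => y + ∫ s in (0:ℝ)..t, f (picard f n y s)) (picardD f (n+1) z₀ t) z₀
    exact (hasDerivAt_id' z₀).add h2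

section Bounds

variable {c : ℂ} {M L τ : ℝ}
  (hM : ∀ z ∈ closedBall c 1, ‖f z‖ ≤ M)
  (hL : LipschitzOnWith (Real.toNNReal L) f (closedBall c 1))
  (hM0 : 0 < M) (hL0 : 0 ≤ L) (hτ0 : 0 < τ) (hτM : τ * M ≤ 1/2) (hτL : τ * L ≤ 1/2)
  (hfc : Continuous f) (hpc : ∀ n, Continuous (fun p : ℂ × ℝ => picard f n p.1 p.2))

include hM hM0 hτM in
/-- step bound and invariance -/
lemma picard_mem : ∀ n, ∀ z ∈ closedBall c (1/2), ∀ t ∈ Icc 0 τ,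
    picard f n z t ∈ closedBall c 1 ∧ ‖picard f (n+1) z t - z‖ ≤ M * t := by
  intro n
  induction n with
  | zero =>
    intro z hz t ht
    have hmem : picard f 0 z t ∈ closedBall c 1 :=
      closedBall_subset_closedBall (by norm_num) hz
    refine ⟨hmem, ?_⟩
    show ‖z + (∫ s in (0:ℝ)..t, f (picard f 0 z s)) - z‖ ≤ M * t
    rw [add_sub_cancel_left]
    have := intervalIntegral.norm_integral_le_of_norm_le_const
      (C := M) (a := 0) (b := t) (f := fun s => f (picard f 0 z s)) ?_
    · rwa [sub_zero, abs_of_nonneg ht.1] at this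
    · intro s hs
      exact hM _ (closedBall_subset_closedBall (by norm_num) hz)
  | succ n ih =>
    intro z hz t ht
    have hmem' : ∀ s ∈ Icc (0:ℝ) τ, picard f (n+1) z s ∈ closedBall c 1 := by
      intro s hs
      have hstep : ‖picard f (n+1) z s - z‖ ≤ M * s := (ih z hz s hs).2
      rw [mem_closedBall, dist_eq_norm]
      calc ‖picard f (n+1) z s - c‖ ≤ ‖picard f (n+1) z s - z‖ + ‖z - c‖ := by
            simpa using norm_add_le (picard f (n+1) z s - z) (z - c)
        _ ≤ M * s + 1/2 := by
            refine add_le_add hstep ?_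
            rw [← dist_eq_norm]; exact hz
        _ ≤ 1/2 + 1/2 := by
            have : M * s ≤ τ * M := by
              rw [mul_comm]; exact mul_le_mul_of_nonneg_right hs.2 hM0.le
            have := le_trans this hτM; linarith
        _ = 1 := by norm_num
    refine ⟨hmem' t ht, ?_⟩
    show ‖z + (∫ s in (0:ℝ)..t, f (picard f (n+1) z s)) - z‖ ≤ M * t
    rw [add_sub_cancel_left]
    have := intervalIntegral.norm_integral_le_of_norm_le_const
      (C := M) (a := 0) (b := t) (f := fun s => f (picard f (n+1) z s)) ?_
    · rwa [sub_zero, abs_of_nonneg ht.1] at this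
    · intro s hs
      have hs' : s ∈ Icc 0 τ := by
        rw [uIoc_of_le ht.1] at hs
        exact ⟨hs.1.le, hs.2.trans ht.2⟩
      exact hM _ (hmem' s hs')

include hM hM0 hτM hτ0 hL hL0 hτL hfc hpc in
/-- contraction estimate between consecutive iterates -/
lemma picard_contract : ∀ n, ∀ z ∈ closedBall c (1/2), ∀ t ∈ Icc 0 τ,
    ‖picard f (n+1) z t - picard f n z t‖ ≤ M * τ * (1/2)^n := by
  intro n
  induction n with
  | zero =>
    intro z hz t ht
    have := (picard_mem hM hM0 hτM 0 z hz t ht).2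
    calc ‖picard f 1 z t - picard f 0 z t‖ = ‖picard f (0+1) z t - z‖ := rfl
      _ ≤ M * t := (picard_mem hM hM0 hτM 0 z hz t ht).2
      _ ≤ M * τ * (1/2)^0 := by
          rw [pow_zero, mul_one]
          exact mul_le_mul_of_nonneg_left ht.2 hM0.le
  | succ n ih =>
    intro z hz t ht
    have hint1 : IntervalIntegrable (fun s => f (picard f (n+1) z s)) volume 0 t :=
      (hfc.comp ((hpc (n+1)).comp (continuous_const.prodMk continuous_id))).intervalIntegrable 0 t
    have hint2 : IntervalIntegrable (fun s => f (picard f n z s)) volume 0 t :=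
      (hfc.comp ((hpc n).comp (continuous_const.prodMk continuous_id))).intervalIntegrable 0 t
    have heq : picard f (n+2) z t - picard f (n+1) z t
        = ∫ s in (0:ℝ)..t, (f (picard f (n+1) z s) - f (picard f n z s)) := by
      rw [intervalIntegral.integral_sub hint1 hint2]
      show z + (∫ s in (0:ℝ)..t, f (picard f (n+1) z s))
          - (z + ∫ s in (0:ℝ)..t, f (picard f n z s)) = _
      ring
    rw [heq]
    have hbound := intervalIntegral.norm_integral_le_of_norm_le_const
      (C := L * (M * τ * (1/2)^n)) (a := 0) (b := t)
      (f := fun s => f (picard f (n+1) z s) - f (picard f n z s)) ?_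
    · rw [sub_zero, abs_of_nonneg ht.1] at hbound
      calc ‖∫ s in (0:ℝ)..t, (f (picard f (n+1) z s) - f (picard f n z s))‖
          ≤ L * (M * τ * (1/2)^n) * t := hbound
        _ ≤ M * τ * (1/2)^(n+1) := by
            have h1 : L * (M * τ * (1/2)^n) * t ≤ L * (M * τ * (1/2)^n) * τ := by
              exact mul_le_mul_of_nonneg_left ht.2
                (mul_nonneg hL0 (mul_nonneg (mul_nonneg hM0.le hτ0.le) (by positivity)))
            refine le_trans h1 ?_
            have h2 : L * (M * τ * (1/2)^n) * τ = (τ * L) * (M * τ * (1/2)^n) := by ring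
            rw [h2]
            calc (τ * L) * (M * τ * (1/2)^n) ≤ (1/2) * (M * τ * (1/2)^n) := by
                  exact mul_le_mul_of_nonneg_right hτL
                    (mul_nonneg (mul_nonneg hM0.le hτ0.le) (by positivity))
              _ = M * τ * (1/2)^(n+1) := by ring
    · intro s hs
      have hs' : s ∈ Icc 0 τ := by
        rw [uIoc_of_le ht.1] at hs
        exact ⟨hs.1.le, hs.2.trans ht.2⟩
      have hm1 := (picard_mem hM hM0 hτM (n+1) z hz s hs').1
      have hm2 := (picard_mem hM hM0 hτM n z hz s hs').1
      have hlip := hL.norm_sub_le hm1 hm2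
      calc ‖f (picard f (n+1) z s) - f (picard f n z s)‖
          ≤ (Real.toNNReal L : ℝ) * ‖picard f (n+1) z s - picard f n z s‖ := hlip
        _ ≤ L * (M * τ * (1/2)^n) := by
            rw [Real.coe_toNNReal _ hL0]
            exact mul_le_mul_of_nonneg_left (ih z hz s hs') hL0

end Bounds

/-- The local flow: solutions on `[0, τ]` from any initial point in `closedBall c (1/2)`,
depending holomorphically on the initial point. -/
lemma localFlow (hf : Differentiable ℂ f) {c : ℂ} {M L τ : ℝ}
    (hM : ∀ z ∈ closedBall c 1, ‖f z‖ ≤ M)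
    (hL : LipschitzOnWith (Real.toNNReal L) f (closedBall c 1))
    (hM0 : 0 < M) (hL0 : 0 ≤ L) (hτ0 : 0 < τ) (hτM : τ * M ≤ 1/2) (hτL : τ * L ≤ 1/2) :
    ∃ Φ : ℂ → ℝ → ℂ,
      (∀ z ∈ closedBall c (1/2), Φ z 0 = z) ∧
      (∀ z ∈ closedBall c (1/2), ∀ t ∈ Icc 0 τ, ‖Φ z t - z‖ ≤ M * t) ∧
      (∀ z ∈ closedBall c (1/2), ContinuousOn (Φ z) (Icc 0 τ)) ∧
      (∀ z ∈ closedBall c (1/2), ∀ t ∈ Icc 0 τ,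
        HasDerivWithinAt (Φ z) (f (Φ z t)) (Icc 0 τ) t) ∧
      (∀ t ∈ Icc 0 τ, DifferentiableOn ℂ (fun z => Φ z t) (ball c (1/2))) := by
  have hfc : Continuous f := hf.continuous
  have hreg := picard_reg hf
  have hpc : ∀ n, Continuous (fun p : ℂ × ℝ => picard f n p.1 p.2) := fun n => (hreg n).1
  -- pointwise limits
  have hcauchy : ∀ z ∈ closedBall c (1/2), ∀ t ∈ Icc 0 τ,
      ∃ l, Tendsto (fun n => picard f n z t) atTop (𝓝 l) := by
    intro z hz t ht
    have : CauchySeq (fun n => picard f n z t) := by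
      apply cauchySeq_of_le_geometric (r := 1/2) (C := M * τ) (by norm_num)
      intro n
      rw [dist_eq_norm, norm_sub_rev]
      exact picard_contract hM hL hM0 hL0 hτ0 hτM hτL hfc hpc n z hz t ht
    exact cauchySeq_tendsto_of_complete this
  choose! Φ hΦ using hcauchy
  have hgeo : ∀ z ∈ closedBall c (1/2), ∀ t ∈ Icc 0 τ, ∀ n,
      dist (picard f n z t) (Φ z t) ≤ (M * τ) * (1/2)^n / (1 - 1/2) := by
    intro z hz t ht n
    apply dist_le_of_le_geometric_of_tendsto (1/2) (M * τ) (by norm_num)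
      (fun m => by
        rw [dist_eq_norm, norm_sub_rev]
        exact picard_contract hM hL hM0 hL0 hτ0 hτM hτL hfc hpc m z hz t ht)
      (hΦ z hz t ht)
  have hb0 : Tendsto (fun n : ℕ => (M * τ) * (1/2)^n / (1 - 1/2)) atTop (𝓝 0) := by
    have := (tendsto_pow_atTop_nhds_zero_of_lt_one (by norm_num : (0:ℝ) ≤ 1/2)
      (by norm_num : (1:ℝ)/2 < 1)).const_mul (M * τ)
    simpa using this.div_const (1 - 1/2)
  -- uniform convergence in t for fixed z
  have hunif_t : ∀ z ∈ closedBall c (1/2),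
      TendstoUniformlyOn (fun n s => picard f n z s) (Φ z) atTop (Icc 0 τ) := by
    intro z hz
    rw [Metric.tendstoUniformlyOn_iff]
    intro ε hε
    filter_upwards [hb0.eventually (gt_mem_nhds hε)] with n hn s hs
    rw [dist_comm]
    exact lt_of_le_of_lt (hgeo z hz s hs n) hn
  -- uniform convergence in z for fixed t
  have hunif_z : ∀ t ∈ Icc (0:ℝ) τ,
      TendstoUniformlyOn (fun n z => picard f n z t) (fun z => Φ z t) atTop
        (closedBall c (1/2)) := by
    intro t ht
    rw [Metric.tendstoUniformlyOn_iff]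
    intro ε hε
    filter_upwards [hb0.eventually (gt_mem_nhds hε)] with n hn z hz
    rw [dist_comm]
    exact lt_of_le_of_lt (hgeo z hz t ht n) hn
  have h0τ : (0:ℝ) ∈ Icc (0:ℝ) τ := ⟨le_refl _, hτ0.le⟩
  -- value at 0
  have hpic0 : ∀ n z, picard f n z 0 = z := by
    intro n z
    induction n with
    | zero => rfl
    | succ n ih =>
      show z + (∫ s in (0:ℝ)..(0:ℝ), f (picard f n z s)) = z
      rw [intervalIntegral.integral_same, add_zero]
  have hΦ0 : ∀ z ∈ closedBall c (1/2), Φ z 0 = z := by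
    intro z hz
    have h1 := hΦ z hz 0 h0τ
    simp only [hpic0] at h1
    exact tendsto_nhds_unique h1 tendsto_const_nhds
  -- displacement bound
  have hMt : ∀ z ∈ closedBall c (1/2), ∀ t ∈ Icc 0 τ, ‖Φ z t - z‖ ≤ M * t := by
    intro z hz t ht
    have h1 : Tendsto (fun n => ‖picard f (n+1) z t - z‖) atTop (𝓝 ‖Φ z t - z‖) :=
      (((hΦ z hz t ht).comp (tendsto_add_atTop_nat 1)).sub tendsto_const_nhds).norm
    exact le_of_tendsto h1
      (Eventually.of_forall fun n => (picard_mem hM hM0 hτM n z hz t ht).2)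
  have hmem1 : ∀ z ∈ closedBall c (1/2), ∀ t ∈ Icc 0 τ, Φ z t ∈ closedBall c 1 := by
    intro z hz t ht
    rw [mem_closedBall, dist_eq_norm]
    have hzc : ‖z - c‖ ≤ 1/2 := by rw [← dist_eq_norm]; exact hz
    have hMtτ : M * t ≤ 1/2 := by
      have h1 : M * t ≤ M * τ := mul_le_mul_of_nonneg_left ht.2 hM0.le
      have h2 : M * τ = τ * M := mul_comm _ _
      linarith [hτM]
    calc ‖Φ z t - c‖ ≤ ‖Φ z t - z‖ + ‖z - c‖ := by
          simpa using norm_add_le (Φ z t - z) (z - c)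
      _ ≤ M * t + 1/2 := add_le_add (hMt z hz t ht) hzc
      _ ≤ 1 := by linarith
  -- continuity in t
  have hcont : ∀ z ∈ closedBall c (1/2), ContinuousOn (Φ z) (Icc 0 τ) := by
    intro z hz
    apply (hunif_t z hz).continuousOn
    exact (Eventually.of_forall fun n =>
      ((hpc n).comp (continuous_const.prodMk continuous_id)).continuousOn).frequently
  -- integral equation
  have hinteq : ∀ z ∈ closedBall c (1/2), ∀ t ∈ Icc 0 τ,
      Φ z t = z + ∫ s in (0:ℝ)..t, f (Φ z s) := by
    intro z hz t ht
    have hsub : uIcc (0:ℝ) t ⊆ Icc 0 τ := by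
      rw [uIcc_of_le ht.1]
      exact Icc_subset_Icc le_rfl ht.2
    have hΦcont : ContinuousOn (fun s => f (Φ z s)) (Icc 0 τ) :=
      hfc.comp_continuousOn (hcont z hz)
    have hint : IntervalIntegrable (fun s => f (Φ z s)) volume 0 t :=
      (hΦcont.mono hsub).intervalIntegrable
    have hR : Tendsto (fun n => z + ∫ s in (0:ℝ)..t, f (picard f n z s)) atTop
        (𝓝 (z + ∫ s in (0:ℝ)..t, f (Φ z s))) := by
      apply tendsto_const_nhds.add
      have hdiff : ∀ n, ‖(∫ s in (0:ℝ)..t, f (picard f n z s))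
          - ∫ s in (0:ℝ)..t, f (Φ z s)‖ ≤ (L * ((M * τ) * (1/2)^n / (1 - 1/2))) * τ := by
        intro n
        have hip : IntervalIntegrable (fun s => f (picard f n z s)) volume 0 t :=
          (hfc.comp ((hpc n).comp (continuous_const.prodMk continuous_id))).intervalIntegrable 0 t
        rw [← intervalIntegral.integral_sub hip hint]
        have hb := intervalIntegral.norm_integral_le_of_norm_le_const
          (C := L * ((M * τ) * (1/2)^n / (1 - 1/2))) (a := 0) (b := t)
          (f := fun s => f (picard f n z s) - f (Φ z s)) ?_
        · rw [sub_zero, abs_of_nonneg ht.1] at hb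
          refine le_trans hb (mul_le_mul_of_nonneg_left ht.2 ?_)
          have : (0:ℝ) ≤ (M * τ) * (1/2)^n / (1 - 1/2) := by
            apply div_nonneg _ (by norm_num)
            exact mul_nonneg (mul_nonneg hM0.le hτ0.le) (by positivity)
          exact mul_nonneg hL0 this
        · intro s hs
          have hs' : s ∈ Icc 0 τ := by
            rw [uIoc_of_le ht.1] at hs
            exact ⟨hs.1.le, hs.2.trans ht.2⟩
          have hlip := hL.norm_sub_le (picard_mem hM hM0 hτM n z hz s hs').1
            (hmem1 z hz s hs')
          refine le_trans hlip ?_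
          rw [Real.coe_toNNReal _ hL0]
          refine mul_le_mul_of_nonneg_left ?_ hL0
          rw [← dist_eq_norm]
          exact hgeo z hz s hs' n
      have hz0 : Tendsto (fun n => (∫ s in (0:ℝ)..t, f (picard f n z s))
          - ∫ s in (0:ℝ)..t, f (Φ z s)) atTop (𝓝 0) := by
        apply squeeze_zero_norm hdiff
        simpa using (hb0.const_mul L).mul_const τ
      have := hz0.add_const (∫ s in (0:ℝ)..t, f (Φ z s))
      simpa using this
    have hLend : Tendsto (fun n => picard f (n+1) z t) atTop (𝓝 (Φ z t)) :=
      (hΦ z hz t ht).comp (tendsto_add_atTop_nat 1)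
    have hform : (fun n => picard f (n+1) z t)
        = fun n => z + ∫ s in (0:ℝ)..t, f (picard f n z s) := rfl
    rw [hform] at hLend
    exact tendsto_nhds_unique hLend hR
  -- derivative in t
  have hderiv : ∀ z ∈ closedBall c (1/2), ∀ t ∈ Icc 0 τ,
      HasDerivWithinAt (Φ z) (f (Φ z t)) (Icc 0 τ) t := by
    intro z hz t ht
    set clamp : ℝ → ℝ := fun s => max 0 (min s τ) with hclamp
    have hclampc : Continuous clamp := continuous_const.max (continuous_id.min continuous_const)
    have hclampmem : ∀ s, clamp s ∈ Icc (0:ℝ) τ := fun s =>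
      ⟨le_max_left _ _, max_le hτ0.le (min_le_right _ _)⟩
    have hclampeq : ∀ s ∈ Icc (0:ℝ) τ, clamp s = s := by
      intro s hs
      rw [hclamp]
      simp only [min_eq_left hs.2, max_eq_right hs.1]
    set g : ℝ → ℂ := fun s => f (Φ z (clamp s)) with hg
    have hgc : Continuous g := hfc.comp ((hcont z hz).comp_continuous hclampc hclampmem)
    have hFTC : HasDerivAt (fun r => z + ∫ s in (0:ℝ)..r, g s) (g t) t := by
      have h1 := intervalIntegral.integral_hasDerivAt_right
        (hgc.intervalIntegrable 0 t) (hgc.stronglyMeasurableAtFilter volume (𝓝 t))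
        hgc.continuousAt
      exact h1.const_add z
    have hEqOn : ∀ r ∈ Icc (0:ℝ) τ, Φ z r = z + ∫ s in (0:ℝ)..r, g s := by
      intro r hr
      rw [hinteq z hz r hr]
      congr 1
      apply intervalIntegral.integral_congr
      intro s hs
      have hs' : s ∈ Icc (0:ℝ) τ := by
        rw [uIcc_of_le hr.1] at hs
        exact ⟨hs.1, hs.2.trans hr.2⟩
      rw [hg]
      simp only [hclampeq s hs']
    have hD := (hFTC.hasDerivWithinAt (s := Icc (0:ℝ) τ)).congr hEqOn (hEqOn t ht)
    have hgt : g t = f (Φ z t) := by rw [hg]; simp only [hclampeq t ht]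
    rwa [hgt] at hD
  -- holomorphy in z
  have hdiffOn : ∀ t ∈ Icc (0:ℝ) τ, DifferentiableOn ℂ (fun z => Φ z t) (ball c (1/2)) := by
    intro t ht
    apply TendstoLocallyUniformlyOn.differentiableOn (φ := atTop)
      (((hunif_z t ht).tendstoLocallyUniformlyOn).mono ball_subset_closedBall)
      (Eventually.of_forall fun n z hz =>
        ((hreg n).2.2 z t).differentiableAt.differentiableWithinAt)
      isOpen_ball
  exact ⟨Φ, hΦ0, hMt, hcont, hderiv, hdiffOn⟩


end IsoPerAux

open IsoPerAux in
/-- near a nonconstant real-time periodic orbit of minimal period `p > 0`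
of a scalar complex entire ODE `ẇ = f(w)`, all globally defined solutions starting
sufficiently close are themselves periodic with the same minimal period `p`
(synchronous iso-periodicity). -/
theorem nearby_orbits_isoperiodic
    (f : ℂ → ℂ) (hf : Differentiable ℂ f) (w : ℝ → ℂ)
    (hw : ∀ t : ℝ, HasDerivAt w (f (w t)) t)
    (hnc : ∃ t₁ t₂ : ℝ, w t₁ ≠ w t₂)
    (p : ℝ) (hp : 0 < p)
    (hper : ∀ t : ℝ, w (t + p) = w t)
    (hmin : ∀ q : ℝ, 0 < q → q < p → ∃ t : ℝ, w (t + q) ≠ w t) :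
    ∃ ε > 0, ∀ v : ℝ → ℂ, (∀ t : ℝ, HasDerivAt v (f (v t)) t) →
      ‖v 0 - w 0‖ < ε →
      (∀ t : ℝ, v (t + p) = v t) ∧
      (∀ q : ℝ, 0 < q → q < p → ∃ t : ℝ, v (t + q) ≠ v t) := by
  classical
  have hfc : Continuous f := hf.continuous
  have hwc : Continuous w := continuous_iff_continuousAt.mpr fun s => (hw s).continuousAt
  -- `f` never vanishes on the orbit
  have hfw : ∀ t, f (w t) ≠ 0 := by
    intro t₀ h0
    obtain ⟨t₁, t₂, hne⟩ := hnc
    have hconst : ∀ s : ℝ, HasDerivAt (fun _ : ℝ => w t₀) (f ((fun _ : ℝ => w t₀) s)) s := by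
      intro s
      simpa [h0] using hasDerivAt_const s (w t₀)
    have := sol_unique hf hw hconst (t₀ := t₀) rfl
    exact hne (by rw [this t₁, this t₂])
  -- global bound for `w`
  obtain ⟨Cw, hCw⟩ := (isCompact_Icc (a := (0:ℝ)) (b := p)).exists_bound_of_continuousOn
    hwc.continuousOn
  have hwbound : ∀ t, ‖w t‖ ≤ Cw := by
    intro t
    obtain ⟨y, hy, hyeq⟩ := Function.Periodic.exists_mem_Ico₀ hper hp t
    rw [hyeq]
    exact hCw y ⟨hy.1, hy.2.le⟩
  have hCw0 : 0 ≤ Cw := le_trans (norm_nonneg _) (hwbound 0)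
  -- constants
  have hchart : ∀ x : ℝ, closedBall (w x) 1 ⊆ closedBall (0:ℂ) (Cw + 2) := by
    intro x z hz
    rw [mem_closedBall_zero_iff]
    calc ‖z‖ ≤ ‖z - w x‖ + ‖w x‖ := by simpa using norm_add_le (z - w x) (w x)
      _ ≤ 1 + Cw := add_le_add (by rw [← dist_eq_norm]; exact hz) (hwbound x)
      _ ≤ Cw + 2 := by linarith
  obtain ⟨M0, hM0b⟩ := (isCompact_closedBall (0:ℂ) (Cw + 2)).exists_bound_of_continuousOn
    hfc.continuousOn
  set M := max M0 1 with hM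
  have hMpos : 0 < M := lt_of_lt_of_le one_pos (le_max_right _ _)
  have hMB : ∀ z ∈ closedBall (0:ℂ) (Cw + 2), ‖f z‖ ≤ M :=
    fun z hz => le_trans (hM0b z hz) (le_max_left _ _)
  obtain ⟨K, hK⟩ := lipschitzOn_closedBall hf 0 (Cw + 2)
  set L := (K : ℝ) with hLdef
  have hL0 : 0 ≤ L := K.coe_nonneg
  have hKB : LipschitzOnWith (Real.toNNReal L) f (closedBall (0:ℂ) (Cw + 2)) := by
    rwa [hLdef, Real.toNNReal_coe]
  set τ := min (1/(2*M)) (1/(2*L+2)) with hτdef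
  have hτ0 : 0 < τ := lt_min (by positivity) (by positivity)
  have hτM : τ * M ≤ 1/2 := by
    have h1 : τ ≤ 1/(2*M) := min_le_left _ _
    calc τ * M ≤ (1/(2*M)) * M := mul_le_mul_of_nonneg_right h1 hMpos.le
      _ = 1/2 := by field_simp
  have hτL : τ * L ≤ 1/2 := by
    have h1 : τ ≤ 1/(2*L+2) := min_le_right _ _
    have h2 : τ * L ≤ (1/(2*L+2)) * L := mul_le_mul_of_nonneg_right h1 hL0
    have h3 : (1/(2*L+2)) * L ≤ 1/2 := by
      rw [div_mul_eq_mul_div, one_mul, div_le_div_iff₀ (by positivity) (by norm_num)]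
      linarith
    linarith
  set ε₀ := Real.exp (-(L*p)) / 8 with hε₀def
  have hε₀ : 0 < ε₀ := by positivity
  have hchartM : ∀ x : ℝ, ∀ z ∈ closedBall (w x) 1, ‖f z‖ ≤ M :=
    fun x z hz => hMB z (hchart x hz)
  have hchartK : ∀ x : ℝ, LipschitzOnWith (Real.toNNReal L) f (closedBall (w x) 1) :=
    fun x => hKB.mono (hchart x)
  -- the holomorphic time-q advance map
  have adv : ∀ q : ℝ, 0 < q → q ≤ p → ∃ Q : ℂ → ℂ,
      DifferentiableOn ℂ Q (ball (w 0) ε₀) ∧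
      ∀ u : ℝ → ℂ, (∀ t, HasDerivAt u (f (u t)) t) → u 0 ∈ ball (w 0) ε₀ →
        u q = Q (u 0) := by
    intro q hq0 hqp
    obtain ⟨n, hn⟩ := exists_nat_gt (p / τ)
    have hn0 : 0 < (n:ℝ) := lt_of_le_of_lt (div_nonneg hp.le hτ0.le) hn
    set h := q / n with hhdef
    have hh0 : 0 < h := div_pos hq0 hn0
    have hhτ : h ≤ τ := by
      rw [hhdef, div_le_iff₀ hn0]
      have hpn : p < τ * n := by rw [div_lt_iff₀ hτ0, mul_comm] at hn; exact hn
      nlinarith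
    have hnh : (n:ℝ) * h = q := by
      rw [hhdef]
      field_simp
    have key : ∀ k : ℕ, (k:ℝ) ≤ (n:ℝ) → ∃ Q : ℂ → ℂ,
        DifferentiableOn ℂ Q (ball (w 0) ε₀) ∧
        (∀ z ∈ ball (w 0) ε₀,
          ‖Q z - w ((k:ℝ)*h)‖ ≤ Real.exp (L*((k:ℝ)*h)) * ‖z - w 0‖) ∧
        (∀ u : ℝ → ℂ, (∀ t, HasDerivAt u (f (u t)) t) → u 0 ∈ ball (w 0) ε₀ →
          u ((k:ℝ)*h) = Q (u 0)) := by
      intro k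
      induction k with
      | zero =>
        intro _
        refine ⟨id, differentiableOn_id, fun z hz => ?_, fun u hu hu0 => ?_⟩
        · simp
        · norm_num
      | succ k ih =>
        intro hk1
        have hk : (k:ℝ) ≤ (n:ℝ) := by
          have : ((k:ℕ):ℝ) ≤ ((k+1:ℕ):ℝ) := by exact_mod_cast Nat.le_succ k
          exact le_trans this (by exact_mod_cast hk1)
        obtain ⟨Qk, hQkd, hQke, hQks⟩ := ih hk
        set c := w ((k:ℝ)*h) with hcdef
        have hkhq : (k:ℝ)*h ≤ q := by
          have h1 : (k:ℝ)*h ≤ (n:ℝ)*h := mul_le_mul_of_nonneg_right hk hh0.le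
          rwa [hnh] at h1
        have hkhp : (k:ℝ)*h ≤ p := le_trans hkhq hqp
        have hbnd : ∀ z ∈ ball (w 0) ε₀, ‖Qk z - c‖ ≤ 1/8 := by
          intro z hz
          have h2 : ‖z - w 0‖ < ε₀ := by rw [← dist_eq_norm]; exact hz
          have h3 : Real.exp (L*((k:ℝ)*h)) ≤ Real.exp (L*p) :=
            Real.exp_le_exp.mpr (mul_le_mul_of_nonneg_left hkhp hL0)
          calc ‖Qk z - c‖ ≤ Real.exp (L*((k:ℝ)*h)) * ‖z - w 0‖ := hQke z hz
            _ ≤ Real.exp (L*p) * ε₀ :=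
                mul_le_mul h3 h2.le (norm_nonneg _) (Real.exp_pos _).le
            _ = 1/8 := by
                rw [hε₀def, ← mul_div_assoc, ← Real.exp_add]
                simp
        obtain ⟨Φ, hΦ0, hΦMt, hΦc, hΦd, hΦhol⟩ := localFlow hf (hchartM ((k:ℝ)*h))
          (hchartK ((k:ℝ)*h)) hMpos hL0 hτ0 hτM hτL
        have hIchh : Icc (0:ℝ) h ⊆ Icc (0:ℝ) τ := Icc_subset_Icc le_rfl hhτ
        have hcc : c ∈ closedBall c (1/2) := mem_closedBall_self (by norm_num)
        have hΦmem : ∀ z ∈ closedBall c (1/2), ∀ s ∈ Icc (0:ℝ) τ,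
            Φ z s ∈ closedBall c 1 := by
          intro z hz s hs
          rw [mem_closedBall, dist_eq_norm]
          have hMs : M * s ≤ 1/2 := by
            have h1 : M * s ≤ M * τ := mul_le_mul_of_nonneg_left hs.2 hMpos.le
            nlinarith
          calc ‖Φ z s - c‖ ≤ ‖Φ z s - z‖ + ‖z - c‖ := by
                simpa using norm_add_le (Φ z s - z) (z - c)
            _ ≤ M * s + 1/2 := add_le_add (hΦMt z hz s hs)
                (by rw [← dist_eq_norm]; exact hz)
            _ ≤ 1 := by linarith
        have hΦmem34 : ∀ z ∈ closedBall c (1/2), ‖z - c‖ ≤ 1/4 → ∀ s ∈ Icc (0:ℝ) h,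
            Φ z s ∈ closedBall c (3/4) := by
          intro z hz hz4 s hs
          have hsτ : s ∈ Icc (0:ℝ) τ := hIchh hs
          rw [mem_closedBall, dist_eq_norm]
          have hMs : M * s ≤ 1/2 := by
            have h1 : M * s ≤ M * τ := mul_le_mul_of_nonneg_left hsτ.2 hMpos.le
            nlinarith
          calc ‖Φ z s - c‖ ≤ ‖Φ z s - z‖ + ‖z - c‖ := by
                simpa using norm_add_le (Φ z s - z) (z - c)
            _ ≤ M * s + 1/4 := add_le_add (hΦMt z hz s hsτ) hz4
            _ ≤ 3/4 := by linarith
        have hwstep : ∀ s ∈ Icc (0:ℝ) h, w ((k:ℝ)*h + s) = Φ c s := by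
          have hushift := sol_shift hw ((k:ℝ)*h)
          have hfa := flow_agrees hushift (hchartK ((k:ℝ)*h)) hh0.le
            ((hΦc c hcc).mono hIchh)
            (fun s hs => (hΦd c hcc s (hIchh hs)).mono hIchh)
            (fun s hs => hΦmem34 c hcc (by simp) s hs)
            (by rw [hΦ0 c hcc]; simp [hcdef])
          intro s hs
          have h1 := hfa s hs
          rwa [add_comm] at h1
        have hcontr : ∀ z ∈ closedBall c (1/2),
            dist (Φ z h) (Φ c h) ≤ dist z c * Real.exp (L * h) := by
          intro z hz
          have hG := dist_le_of_trajectories_ODE_of_mem (v := fun _ x => f x)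
            (s := fun _ => closedBall c 1) (K := Real.toNNReal L)
            (fun _ _ => hchartK ((k:ℝ)*h))
            ((hΦc z hz).mono hIchh)
            (fun t ht => hderWithin_Ici (hΦd z hz t ⟨ht.1, (le_of_lt ht.2).trans hhτ⟩)
              ht.1 (lt_of_lt_of_le ht.2 hhτ))
            (fun t ht => hΦmem z hz t ⟨ht.1, (le_of_lt ht.2).trans hhτ⟩)
            ((hΦc c hcc).mono hIchh)
            (fun t ht => hderWithin_Ici (hΦd c hcc t ⟨ht.1, (le_of_lt ht.2).trans hhτ⟩)
              ht.1 (lt_of_lt_of_le ht.2 hhτ))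
            (fun t ht => hΦmem c hcc t ⟨ht.1, (le_of_lt ht.2).trans hhτ⟩)
            (by rw [hΦ0 z hz, hΦ0 c hcc]) h ⟨hh0.le, le_refl _⟩
          have hcoe : ((Real.toNNReal L : ℝ≥0) : ℝ) = L := Real.coe_toNNReal _ hL0
          rw [sub_zero] at hG
          calc dist (Φ z h) (Φ c h) ≤ dist z c * Real.exp ((Real.toNNReal L : ℝ) * h) := hG
            _ = dist z c * Real.exp (L * h) := by rw [hcoe]
        have hQmem : ∀ z ∈ ball (w 0) ε₀, Qk z ∈ closedBall c (1/2) := by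
          intro z hz
          rw [mem_closedBall, dist_eq_norm]
          exact le_trans (hbnd z hz) (by norm_num)
        have hcast : ((k+1 : ℕ):ℝ) * h = (k:ℝ)*h + h := by push_cast; ring
        have hh' : h ∈ Icc (0:ℝ) τ := ⟨hh0.le, hhτ⟩
        refine ⟨fun z => Φ (Qk z) h, ?_, ?_, ?_⟩
        · apply DifferentiableOn.comp (hΦhol h hh') hQkd
          intro z hz
          rw [mem_ball, dist_eq_norm]
          exact lt_of_le_of_lt (hbnd z hz) (by norm_num)
        · intro z hz
          have h1 := hcontr (Qk z) (hQmem z hz)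
          have hwk1 : w (((k+1:ℕ):ℝ) * h) = Φ c h := by
            rw [hcast]
            exact hwstep h ⟨hh0.le, le_refl _⟩
          calc ‖Φ (Qk z) h - w (((k+1:ℕ):ℝ) * h)‖
              = dist (Φ (Qk z) h) (Φ c h) := by rw [hwk1, dist_eq_norm]
            _ ≤ dist (Qk z) c * Real.exp (L*h) := h1
            _ = ‖Qk z - c‖ * Real.exp (L*h) := by rw [dist_eq_norm]
            _ ≤ (Real.exp (L*((k:ℝ)*h)) * ‖z - w 0‖) * Real.exp (L*h) :=
                mul_le_mul_of_nonneg_right (hQke z hz) (Real.exp_pos _).le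
            _ = Real.exp (L*(((k+1:ℕ):ℝ) * h)) * ‖z - w 0‖ := by
                rw [hcast, mul_add, Real.exp_add]
                ring
        · intro u hu hu0
          have hukh : u ((k:ℝ)*h) = Qk (u 0) := hQks u hu hu0
          have hz12 : Qk (u 0) ∈ closedBall c (1/2) := hQmem _ hu0
          have hustep : ∀ s ∈ Icc (0:ℝ) h, u ((k:ℝ)*h + s) = Φ (Qk (u 0)) s := by
            have hshift := sol_shift hu ((k:ℝ)*h)
            have hfa := flow_agrees hshift (hchartK ((k:ℝ)*h)) hh0.le
              ((hΦc _ hz12).mono hIchh)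
              (fun s hs => (hΦd _ hz12 s (hIchh hs)).mono hIchh)
              (fun s hs => hΦmem34 _ hz12 (le_trans (hbnd (u 0) hu0) (by norm_num)) s hs)
              (by rw [hΦ0 _ hz12]; simpa using hukh)
            intro s hs
            have h1 := hfa s hs
            rwa [add_comm] at h1
          rw [hcast]
          rw [hustep h ⟨hh0.le, le_refl _⟩]
    obtain ⟨Q, h1, h2, h3⟩ := key n le_rfl
    refine ⟨Q, h1, fun u hu hu0 => ?_⟩
    rw [← hnh]
    exact h3 u hu hu0
  -- `f` does not vanish near `w 0`
  obtain ⟨εf, hεf0, hεf⟩ : ∃ εf > 0, ∀ z, dist z (w 0) < εf → f z ≠ 0 := by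
    obtain ⟨δ, hδ0, hδ⟩ := Metric.continuousAt_iff.mp (hfc.continuousAt (x := w 0))
      ‖f (w 0)‖ (norm_pos_iff.mpr (hfw 0))
    refine ⟨δ, hδ0, fun z hz h0 => ?_⟩
    have h1 := hδ hz
    rw [h0, dist_comm, dist_zero_right] at h1
    exact lt_irrefl _ h1
  -- choose ε
  refine ⟨min (ε₀/2) εf, lt_min (by positivity) hεf0, ?_⟩
  intro v hv hv0
  have hvcont : Continuous v := continuous_iff_continuousAt.mpr fun s => (hv s).continuousAt
  have hv0ε₀ : v 0 ∈ ball (w 0) ε₀ := by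
    rw [mem_ball, dist_eq_norm]
    have := lt_of_lt_of_le hv0 (min_le_left _ _)
    linarith
  -- Part 1 : periodicity with period p
  obtain ⟨Q, hQd, hQs⟩ := adv p hp le_rfl
  have hQw : ∀ᶠ t in 𝓝[≠] (0:ℝ), Q (w t) = w t := by
    have hball : ∀ᶠ t in 𝓝 (0:ℝ), w t ∈ ball (w 0) ε₀ :=
      hwc.continuousAt.preimage_mem_nhds (isOpen_ball.mem_nhds (mem_ball_self hε₀))
    apply eventually_nhdsWithin_of_eventually_nhds
    filter_upwards [hball] with t ht
    have hys := hQs (fun s => w (s + t)) (sol_shift hw t) (by simpa using ht)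
    simp only [zero_add] at hys
    rw [add_comm, hper t] at hys
    exact hys.symm
  have hwne : ∀ᶠ t in 𝓝[≠] (0:ℝ), w t ≠ w 0 := ne_near (hw 0) (hfw 0)
  have htendsto : Tendsto w (𝓝[≠] (0:ℝ)) (𝓝[≠] (w 0)) := by
    rw [tendsto_nhdsWithin_iff]
    exact ⟨(hwc.tendsto 0).mono_left nhdsWithin_le_nhds,
      hwne.mono fun t ht => mem_compl_singleton_iff.mpr ht⟩
  have hfreq : ∃ᶠ z in 𝓝[≠] (w 0), Q z = z := htendsto.frequently hQw.frequently
  have hQid : EqOn Q id (ball (w 0) ε₀) :=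
    AnalyticOnNhd.eqOn_of_preconnected_of_frequently_eq
      (hQd.analyticOnNhd isOpen_ball)
      (differentiable_id.differentiableOn.analyticOnNhd isOpen_ball)
      (convex_ball _ _).isPreconnected (mem_ball_self hε₀) hfreq
  have hvp : v p = v 0 := by
    rw [hQs v hv hv0ε₀, hQid hv0ε₀, id]
  have hvper : ∀ t, v (t + p) = v t :=
    sol_unique hf (sol_shift hv p) hv (t₀ := 0) (by simpa using hvp)
  refine ⟨hvper, ?_⟩
  -- Part 2 : minimality
  intro q hq0 hqp
  by_contra hcon
  push_neg at hcon
  obtain ⟨Q2, hQ2d, hQ2s⟩ := adv q hq0 hqp.le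
  have hfv0 : f (v 0) ≠ 0 := by
    apply hεf
    rw [dist_eq_norm]
    exact lt_of_lt_of_le hv0 (min_le_right _ _)
  have hvne : ∀ᶠ t in 𝓝[≠] (0:ℝ), v t ≠ v 0 := ne_near (hv 0) hfv0
  have hQ2v : ∀ᶠ t in 𝓝[≠] (0:ℝ), Q2 (v t) = v t := by
    have hball : ∀ᶠ t in 𝓝 (0:ℝ), v t ∈ ball (w 0) ε₀ :=
      hvcont.continuousAt.preimage_mem_nhds (isOpen_ball.mem_nhds hv0ε₀)
    apply eventually_nhdsWithin_of_eventually_nhds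
    filter_upwards [hball] with t ht
    have hys := hQ2s (fun s => v (s + t)) (sol_shift hv t) (by simpa using ht)
    simp only [zero_add] at hys
    rw [add_comm, hcon t] at hys
    exact hys.symm
  have htv : Tendsto v (𝓝[≠] (0:ℝ)) (𝓝[≠] (v 0)) := by
    rw [tendsto_nhdsWithin_iff]
    exact ⟨(hvcont.tendsto 0).mono_left nhdsWithin_le_nhds,
      hvne.mono fun t ht => mem_compl_singleton_iff.mpr ht⟩
  have hfreq2 : ∃ᶠ z in 𝓝[≠] (v 0), Q2 z = z := htv.frequently hQ2v.frequently
  have hQ2id : EqOn Q2 id (ball (w 0) ε₀) :=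
    AnalyticOnNhd.eqOn_of_preconnected_of_frequently_eq
      (hQ2d.analyticOnNhd isOpen_ball)
      (differentiable_id.differentiableOn.analyticOnNhd isOpen_ball)
      (convex_ball _ _).isPreconnected hv0ε₀ hfreq2
  have hwq : w q = w 0 := by
    rw [hQ2s w hw (mem_ball_self hε₀), hQ2id (mem_ball_self hε₀), id]
  have hwper : ∀ t, w (t + q) = w t :=
    sol_unique hf (sol_shift hw q) hw (t₀ := 0) (by simpa using hwq)
  obtain ⟨t, hts⟩ := hmin q hq0 hqp
  exact hts (hwper t)
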